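/- For all positive reals a, b: S(a,b) − H(a,b) ≤ (3/2)(A(a,b) − H(a,b)), equivalently 2S(a,b) + H(a,b) ≤ 3A(a,b). -/

import Mathlib

theorem msh_le_mah (a b : ℝ) (ha : 0 < a) (hb : 0 < b) :
    Real.sqrt ((a ^ 2 + b ^ 2) / 2) - 2 * a * b / (a + b) ≤
      (3/2) * ((a + b) / 2 - 2 * a * b / (a + b)) := by
  have hab : 0 < a + b := by linarith
  have key : Real.sqrt ((a ^ 2 + b ^ 2) / 2) ≤ 3 * (a + b) / 4 - a * b / (a + b) := by
    rw [Real.sqrt_le_iff]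
    constructor
    · rw [sub_nonneg, div_le_div_iff₀ hab (by norm_num : (0:ℝ) < 4)]
      nlinarith [sq_nonneg (a - b)]
    · rw [← sub_nonneg]
      have h : (3 * (a + b) / 4 - a * b / (a + b)) ^ 2 - (a ^ 2 + b ^ 2) / 2
          = ((3 * (a + b)^2 / 4 - a * b) ^ 2 - (a^2+b^2)/2 * (a+b)^2) / (a+b)^2 := by
        field_simp
      rw [h]
      apply div_nonneg _ (by positivity)
      nlinarith [sq_nonneg ((a-b)^2), mul_pos ha hb, sq_nonneg (a-b), sq_nonneg (a*b)]
  have h2 : 2 * a * b / (a + b) = 2 * (a * b / (a + b)) := by ring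
  rw [h2]
  linarith [key]
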